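/- Let f_Gam(x) denote the density of S_T with T gamma-distributed Gam(k, λ) (and parameters μ̃ ∈ ℝ, σ > 0, S₀ > 0). Then as x → ∞, f_Gam(x) is asymptotically equivalent to (λ^k/(Γ(k)(μ̃² + 2σ²λ)^{k/2} S₀)) (x/S₀)^{-α-1} (ln(x/S₀))^{k-1}, where α = (-μ̃ + √(μ̃² + 2σ²λ))/σ². -/

import Mathlib

open MeasureTheory Real Set Filter

/-- Modified Bessel function of the second kind, via its integral representation. -/
noncomputable def besselK (ν z : ℝ) : ℝ :=
  2 ^ (ν - 1) * ∫ t in Set.Ioi (0:ℝ), t ^ (ν - 1) * Real.exp (-z * t - z / (4 * t))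

/-- Lognormal density with parameters m (log-mean) and v (log-variance). -/
noncomputable def lognormalPdf (m v x : ℝ) : ℝ :=
  (1 / (Real.sqrt (2 * π * v) * x)) * Real.exp (-(Real.log x - m) ^ 2 / (2 * v))

lemma aux_pow_le_fact_mul_exp (m : ℕ) {x : ℝ} (hx : 0 ≤ x) :
    x ^ m ≤ (m.factorial : ℝ) * Real.exp x := by
  have h := Real.pow_div_factorial_le_exp x hx m
  have hm : (0:ℝ) < (m.factorial : ℝ) := by exact_mod_cast m.factorial_pos
  rw [div_le_iff₀ hm] at h
  linarith [h]

lemma aux_core_bound (ν : ℝ) (m : ℕ) (hm : |ν - 1| ≤ (m:ℝ)) {t : ℝ} (ht : 0 < t) :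
    t ^ (ν - 1) * Real.exp (-((t - 1/2)^2 / (2*t))) ≤ 32 ^ m * (m.factorial : ℝ) := by
  have hm1 : ν - 1 ≤ (m:ℝ) := (le_abs_self _).trans hm
  have hm2 : -(m:ℝ) ≤ ν - 1 := by
    have := neg_abs_le (ν - 1); linarith
  have hfact : (1:ℝ) ≤ (m.factorial : ℝ) := by exact_mod_cast m.factorial_pos
  have h32 : (8:ℝ)^m ≤ 32^m := pow_le_pow_left₀ (by norm_num) (by norm_num) m
  have h4 : (4:ℝ)^m ≤ 32^m := pow_le_pow_left₀ (by norm_num) (by norm_num) m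
  rcases le_or_gt 1 t with h1 | h1
  · -- t ≥ 1
    have e1 : t ^ (ν - 1) ≤ t ^ (m:ℝ) := Real.rpow_le_rpow_of_exponent_le h1 hm1
    have e2 : Real.exp (-((t - 1/2)^2 / (2*t))) ≤ Real.exp (-(t/8)) := by
      apply Real.exp_le_exp.2
      apply neg_le_neg
      rw [div_le_div_iff₀ (by norm_num) (by positivity)]
      nlinarith [sq_nonneg (t - 1)]
    have e3 : t ^ m ≤ 8^m * ((m.factorial : ℝ) * Real.exp (t/8)) := by
      have h8 : t ^ m = 8^m * (t/8)^m := by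
        rw [← mul_pow, show (8:ℝ)*(t/8) = t by ring]
      rw [h8]
      have := aux_pow_le_fact_mul_exp m (x := t/8) (by positivity)
      nlinarith [pow_pos (show (0:ℝ) < 8 by norm_num) m]
    calc t ^ (ν - 1) * Real.exp (-((t - 1/2)^2 / (2*t)))
        ≤ t ^ (m:ℝ) * Real.exp (-(t/8)) := by
          apply mul_le_mul e1 e2 (Real.exp_pos _).le (Real.rpow_nonneg (by linarith) _)
      _ = t ^ m * Real.exp (-(t/8)) := by rw [Real.rpow_natCast]
      _ ≤ (8^m * ((m.factorial : ℝ) * Real.exp (t/8))) * Real.exp (-(t/8)) := by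
          apply mul_le_mul_of_nonneg_right e3 (Real.exp_pos _).le
      _ = 8^m * (m.factorial : ℝ) := by
          rw [Real.exp_neg]
          have h := (Real.exp_pos (t/8)).ne'
          field_simp
      _ ≤ 32^m * (m.factorial : ℝ) := by
          apply mul_le_mul_of_nonneg_right h32 (by positivity)
  · have e1 : t ^ (ν - 1) ≤ t ^ (-(m:ℝ)) := Real.rpow_le_rpow_of_exponent_ge ht h1.le hm2
    have hrn : t ^ (-(m:ℝ)) = (t ^ m)⁻¹ := by
      rw [Real.rpow_neg ht.le, Real.rpow_natCast]
    rcases le_or_gt (1/4 : ℝ) t with h2 | h2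
    · -- 1/4 ≤ t < 1
      have e2 : t ^ (-(m:ℝ)) ≤ 4^m := by
        rw [hrn]
        have h14 : ((1:ℝ)/4)^m ≤ t^m := pow_le_pow_left₀ (by norm_num) h2 m
        have h40 : (0:ℝ) < ((1:ℝ)/4)^m := by positivity
        have := inv_anti₀ h40 h14
        calc (t^m)⁻¹ ≤ (((1:ℝ)/4)^m)⁻¹ := this
          _ = 4^m := by rw [← inv_pow]; norm_num
      have e3 : Real.exp (-((t - 1/2)^2 / (2*t))) ≤ 1 := by
        rw [Real.exp_le_one_iff]
        have : (0:ℝ) ≤ (t - 1/2)^2 / (2*t) := by positivity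
        linarith
      calc t ^ (ν - 1) * Real.exp (-((t - 1/2)^2 / (2*t)))
          ≤ (4^m : ℝ) * 1 := by
            apply mul_le_mul (e1.trans e2) e3 (Real.exp_pos _).le (by positivity)
        _ ≤ 32^m * (m.factorial : ℝ) := by
            rw [mul_one]
            calc (4:ℝ)^m ≤ 32^m := h4
              _ = 32^m * 1 := (mul_one _).symm
              _ ≤ 32^m * (m.factorial : ℝ) := by
                  apply mul_le_mul_of_nonneg_left hfact (by positivity)
    · -- 0 < t < 1/4
      set x := 1/(32*t) with hxdef
      have hx0 : 0 < x := by positivity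
      have e2 : Real.exp (-((t - 1/2)^2 / (2*t))) ≤ Real.exp (-x) := by
        apply Real.exp_le_exp.2
        apply neg_le_neg
        rw [hxdef, div_le_div_iff₀ (by positivity) (by positivity)]
        nlinarith [mul_pos (mul_pos ht (show (0:ℝ) < 3 - 4*t by linarith)) (show (0:ℝ) < 1 - 4*t by linarith)]
      have hinv : t⁻¹ = 32 * x := by
        rw [hxdef]; field_simp
      have e3 : t ^ (-(m:ℝ)) = 32^m * x^m := by
        rw [hrn, ← inv_pow, hinv, mul_pow]
      have e4 : x^m ≤ (m.factorial : ℝ) * Real.exp x := aux_pow_le_fact_mul_exp m hx0.le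
      calc t ^ (ν - 1) * Real.exp (-((t - 1/2)^2 / (2*t)))
          ≤ t ^ (-(m:ℝ)) * Real.exp (-x) := by
            apply mul_le_mul e1 e2 (Real.exp_pos _).le (Real.rpow_nonneg ht.le _)
        _ = 32^m * x^m * Real.exp (-x) := by rw [e3]
        _ ≤ 32^m * ((m.factorial : ℝ) * Real.exp x) * Real.exp (-x) := by
            apply mul_le_mul_of_nonneg_right _ (Real.exp_pos _).le
            apply mul_le_mul_of_nonneg_left e4 (by positivity)
        _ = 32^m * (m.factorial : ℝ) := by
            rw [Real.exp_neg]
            have h := (Real.exp_pos x).ne'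
            field_simp
noncomputable def besselF (ν z s : ℝ) : ℝ :=
  (Set.Ioi (-Real.sqrt z/2)).indicator
    (fun s => (1/2 + s/Real.sqrt z) ^ (ν - 1) * Real.exp (-s^2/(1/2 + s/Real.sqrt z))) s

lemma aux_exp_bound (s : ℝ) :
    Real.exp (-(s^2/(1+2*|s|))) ≤ 36 * (1+s^2)⁻¹ := by
  set y := s^2/(1+2*|s|) with hy
  have h1 : (0:ℝ) < 1+2*|s| := by positivity
  have hy0 : 0 ≤ y := by positivity
  have key : (3*y+1-|s|)*(1+2*|s|) = s^2+|s|+1 := by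
    rw [hy]; field_simp; linear_combination (-2:ℝ) * sq_abs s
  have habs : |s| ≤ 3*y+1 := by nlinarith [abs_nonneg s, sq_abs s]
  have hey : y ≤ Real.exp y := by linarith [Real.add_one_le_exp y]
  have hey2 : y^2 ≤ 2*Real.exp y := by
    have := aux_pow_le_fact_mul_exp 2 hy0
    norm_num at this
    linarith
  have hsq : s^2 ≤ (3*y+1)^2 := by nlinarith [sq_abs s, abs_nonneg s]
  have h36 : 1+s^2 ≤ 36*Real.exp y := by
    nlinarith [hsq, hey, hey2, Real.one_le_exp hy0]
  have hb : (0:ℝ) < 1+s^2 := by positivity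
  have step : (1+s^2) * Real.exp (-y) ≤ 36 := by
    rw [Real.exp_neg, mul_inv_le_iff₀ (Real.exp_pos y)]
    linarith [h36]
  calc Real.exp (-y) = (1+s^2)*Real.exp (-y) * (1+s^2)⁻¹ := by field_simp
    _ ≤ 36 * (1+s^2)⁻¹ := mul_le_mul_of_nonneg_right step (by positivity)

lemma aux_Fbound (ν : ℝ) (m : ℕ) (hm : |ν-1| ≤ (m:ℝ)) {z s : ℝ} (hz : 1 ≤ z)
    (hs : -Real.sqrt z/2 < s) :
    (1/2 + s/Real.sqrt z) ^ (ν-1) * Real.exp (-s^2/(1/2 + s/Real.sqrt z)) ≤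
      32^m * (m.factorial:ℝ) * (36 * (1+s^2)⁻¹) := by
  set w := Real.sqrt z with hwdef
  have hw1 : 1 ≤ w := Real.one_le_sqrt.2 hz
  have hw0 : 0 < w := lt_of_lt_of_le one_pos hw1
  have hnum : 0 < w/2 + s := by
    have : -(w/2) < s := by linarith [hs]
    linarith
  set t := 1/2 + s/w with htdef
  have htw : t = (w/2 + s)/w := by rw [htdef]; field_simp; try ring
  have ht : 0 < t := by rw [htw]; exact div_pos hnum hw0
  have hsplit : -s^2/t = -(s^2/(2*t)) + -(s^2/(2*t)) := by field_simp; ring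
  have hts : (t-1/2)^2 ≤ s^2 := by
    have h' : t - 1/2 = s/w := by rw [htdef]; ring
    rw [h', div_pow, div_le_iff₀ (by positivity)]
    nlinarith [sq_nonneg s, mul_le_mul hw1 hw1 zero_le_one hw0.le]
  have e1 : Real.exp (-(s^2/(2*t))) ≤ Real.exp (-((t-1/2)^2/(2*t))) := by
    exact Real.exp_le_exp.2 (neg_le_neg (by gcongr))
  have stepA : t ^ (ν-1) * Real.exp (-(s^2/(2*t))) ≤ 32^m * (m.factorial:ℝ) := by
    calc t ^ (ν-1) * Real.exp (-(s^2/(2*t)))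
        ≤ t ^ (ν-1) * Real.exp (-((t-1/2)^2/(2*t))) :=
          mul_le_mul_of_nonneg_left e1 (Real.rpow_nonneg ht.le _)
      _ ≤ 32^m * (m.factorial:ℝ) := aux_core_bound ν m hm ht
  have h2t : 2*t ≤ 1 + 2*|s| := by
    have hsw : s/w ≤ |s| := by
      refine (le_abs_self _).trans ?_
      rw [abs_div, abs_of_pos hw0]
      exact div_le_self (abs_nonneg s) hw1
    rw [htdef]; linarith
  have stepB : Real.exp (-(s^2/(2*t))) ≤ 36 * (1+s^2)⁻¹ := by
    refine le_trans ?_ (aux_exp_bound s)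
    refine Real.exp_le_exp.2 (neg_le_neg ?_)
    have h2t0 : 0 < 2*t := by positivity
    gcongr
  calc (1/2 + s/w) ^ (ν-1) * Real.exp (-s^2/(1/2 + s/w))
      = (t ^ (ν-1) * Real.exp (-(s^2/(2*t)))) * Real.exp (-(s^2/(2*t))) := by
        rw [← htdef, hsplit, Real.exp_add]; ring
    _ ≤ (32^m * (m.factorial:ℝ)) * (36 * (1+s^2)⁻¹) := by
        apply mul_le_mul stepA stepB (Real.exp_pos _).le (by positivity)
lemma aux_besselK_eq (ν : ℝ) {z : ℝ} (hz : 0 < z) :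
    Real.sqrt z * Real.exp z * besselK ν z = 2^(ν-1) * ∫ s, besselF ν z s := by
  obtain ⟨w, hw0, rfl⟩ : ∃ w, 0 < w ∧ w^2 = z :=
    ⟨Real.sqrt z, Real.sqrt_pos.2 hz, Real.sq_sqrt hz.le⟩
  have hwne : w ≠ 0 := hw0.ne'
  have hws : Real.sqrt (w^2) = w := Real.sqrt_sq hw0.le
  set H : ℝ → ℝ :=
    (Set.Ioi (0:ℝ)).indicator (fun t => t ^ (ν-1) * Real.exp (-w^2*t - w^2/(4*t))) with hH
  have h1 : (∫ t in Set.Ioi (0:ℝ), t ^ (ν-1) * Real.exp (-w^2*t - w^2/(4*t))) = ∫ t, H t :=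
    (MeasureTheory.integral_indicator measurableSet_Ioi).symm
  have h2 : (∫ x, H (w⁻¹ * x)) = w • ∫ x, H x := by
    rw [MeasureTheory.Measure.integral_comp_mul_left H w⁻¹, inv_inv, abs_of_pos hw0]
  have h3 : (∫ s, H (w⁻¹ * (s + w/2))) = ∫ x, H (w⁻¹ * x) :=
    MeasureTheory.integral_add_right_eq_self (fun x => H (w⁻¹ * x)) (w/2)
  have h4 : ∀ s, Real.exp (w^2) * H (w⁻¹ * (s + w/2)) = besselF ν (w^2) s := by
    intro s
    simp only [besselF, hws]
    by_cases hs : s ∈ Set.Ioi (-w/2)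
    · have hsl : -w/2 < s := hs
      have hb : 0 < 1/2 + s/w := by
        rw [show (1:ℝ)/2 + s/w = (w/2 + s)/w from by field_simp; try ring]
        exact div_pos (by linarith) hw0
      have hu : w⁻¹ * (s + w/2) = 1/2 + s/w := by field_simp; try ring
      rw [Set.indicator_of_mem hs, hu, hH,
        Set.indicator_of_mem (by exact hb : (1/2 + s/w) ∈ Set.Ioi (0:ℝ))]
      have harg : w^2 + (-w^2*(1/2 + s/w) - w^2/(4*(1/2 + s/w))) = -s^2/(1/2 + s/w) := by
        have hbne : (1:ℝ)/2 + s/w ≠ 0 := hb.ne'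
        have hp1 : w + s*2 ≠ 0 := (by linarith : (0:ℝ) < w + s*2).ne'
        have hp2 : w + 2*s ≠ 0 := (by linarith : (0:ℝ) < w + 2*s).ne'
        have hp3 : w*4 + s*8 ≠ 0 := (by linarith : (0:ℝ) < w*4 + s*8).ne'
        field_simp
        ring
      calc Real.exp (w^2) * ((1/2 + s/w)^(ν-1) * Real.exp (-w^2*(1/2 + s/w) - w^2/(4*(1/2 + s/w))))
          = (1/2 + s/w)^(ν-1) *
            (Real.exp (w^2) * Real.exp (-w^2*(1/2 + s/w) - w^2/(4*(1/2 + s/w)))) := by ring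
        _ = (1/2 + s/w)^(ν-1) * Real.exp (-s^2/(1/2 + s/w)) := by
            rw [← Real.exp_add, harg]
    · have hnot : w⁻¹ * (s + w/2) ∉ Set.Ioi (0:ℝ) := by
        simp only [Set.mem_Ioi, not_lt] at hs ⊢
        have h5 : s + w/2 ≤ 0 := by linarith
        exact mul_nonpos_of_nonneg_of_nonpos (inv_nonneg.2 hw0.le) h5
      rw [Set.indicator_of_notMem hs, hH, Set.indicator_of_notMem hnot, mul_zero]
  have main : Real.sqrt (w^2) * Real.exp (w^2) *
      (∫ t in Set.Ioi (0:ℝ), t ^ (ν-1) * Real.exp (-w^2*t - w^2/(4*t))) =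
      ∫ s, besselF ν (w^2) s := by
    calc Real.sqrt (w^2) * Real.exp (w^2) *
        (∫ t in Set.Ioi (0:ℝ), t ^ (ν-1) * Real.exp (-w^2*t - w^2/(4*t)))
        = Real.exp (w^2) * (w • ∫ t, H t) := by rw [hws, h1, smul_eq_mul]; ring
      _ = Real.exp (w^2) * ∫ x, H (w⁻¹ * x) := by rw [h2]
      _ = Real.exp (w^2) * ∫ s, H (w⁻¹ * (s + w/2)) := by rw [h3]
      _ = ∫ s, Real.exp (w^2) * H (w⁻¹ * (s + w/2)) :=
          (MeasureTheory.integral_const_mul _ _).symm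
      _ = ∫ s, besselF ν (w^2) s := by simp_rw [h4]
  rw [besselK]
  calc Real.sqrt (w^2) * Real.exp (w^2) *
      (2 ^ (ν - 1) * ∫ t in Set.Ioi (0:ℝ), t ^ (ν-1) * Real.exp (-w^2*t - w^2/(4*t)))
      = 2 ^ (ν - 1) * (Real.sqrt (w^2) * Real.exp (w^2) *
        ∫ t in Set.Ioi (0:ℝ), t ^ (ν-1) * Real.exp (-w^2*t - w^2/(4*t))) := by ring
    _ = 2^(ν-1) * ∫ s, besselF ν (w^2) s := by rw [main]

lemma besselK_asymp (ν : ℝ) :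
    Tendsto (fun z => Real.sqrt z * Real.exp z * besselK ν z) atTop
      (nhds (Real.sqrt (π/2))) := by
  set m := ⌈|ν-1|⌉₊ with hmdef
  have hm : |ν - 1| ≤ (m:ℝ) := Nat.le_ceil _
  have key : Tendsto (fun z => ∫ s, besselF ν z s) atTop
      (nhds (∫ s : ℝ, (1/2:ℝ)^(ν-1) * Real.exp (-2*s^2))) := by
    apply MeasureTheory.tendsto_integral_filter_of_dominated_convergence
      (fun s => 32^m * (m.factorial:ℝ) * (36 * (1+s^2)⁻¹))
    · filter_upwards with z
      apply Measurable.aestronglyMeasurable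
      show Measurable fun s : ℝ => (Set.Ioi (-Real.sqrt z/2)).indicator
        (fun s => (1/2 + s/Real.sqrt z) ^ (ν - 1) *
          Real.exp (-s^2/(1/2 + s/Real.sqrt z))) s
      apply Measurable.indicator _ measurableSet_Ioi
      measurability
    · filter_upwards [eventually_ge_atTop 1] with z hz1
      apply Filter.Eventually.of_forall
      intro s
      simp only [besselF]
      by_cases hs : s ∈ Set.Ioi (-Real.sqrt z/2)
      · rw [Set.indicator_of_mem hs]
        have hw0 : 0 < Real.sqrt z := Real.sqrt_pos.2 (by linarith)
        have hwne : Real.sqrt z ≠ 0 := hw0.ne'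
        have hsl : -Real.sqrt z/2 < s := hs
        have hb : 0 < 1/2 + s/Real.sqrt z := by
          rw [show (1:ℝ)/2 + s/Real.sqrt z = (Real.sqrt z/2 + s)/Real.sqrt z from by
            field_simp; try ring]
          exact div_pos (by linarith) hw0
        rw [Real.norm_eq_abs,
          abs_of_pos (mul_pos (Real.rpow_pos_of_pos hb _) (Real.exp_pos _))]
        exact aux_Fbound ν m hm hz1 hsl
      · rw [Set.indicator_of_notMem hs, norm_zero]
        positivity
    · exact (integrable_inv_one_add_sq.const_mul 36).const_mul _
    · apply Filter.Eventually.of_forall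
      intro s
      have hev : ∀ᶠ z in atTop, besselF ν z s =
          (1/2 + s/Real.sqrt z)^(ν-1) * Real.exp (-s^2/(1/2 + s/Real.sqrt z)) := by
        filter_upwards [eventually_gt_atTop ((2*s)^2)] with z hz2
        have hmem : s ∈ Set.Ioi (-Real.sqrt z/2) := by
          rw [Set.mem_Ioi]
          have h5 : 2*|s| < Real.sqrt z := by
            have := Real.sqrt_lt_sqrt (sq_nonneg (2*s)) hz2
            rwa [Real.sqrt_sq_eq_abs, abs_mul, abs_two] at this
          have h6 : -s ≤ |s| := neg_le_abs s
          linarith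
        simp only [besselF]
        rw [Set.indicator_of_mem hmem]
      have hsq : Tendsto Real.sqrt atTop atTop := by
        apply Tendsto.congr (fun x => (Real.sqrt_eq_rpow x).symm)
        exact tendsto_rpow_atTop (by norm_num)
      have hbase : Tendsto (fun z => 1/2 + s/Real.sqrt z) atTop (nhds (1/2)) := by
        have h0 : Tendsto (fun z => s/Real.sqrt z) atTop (nhds 0) := by
          have := (hsq.inv_tendsto_atTop).const_mul s
          simpa [div_eq_mul_inv] using this
        simpa using tendsto_const_nhds.add h0
      have h1 : Tendsto (fun z => (1/2 + s/Real.sqrt z)^(ν-1)) atTop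
          (nhds ((1/2:ℝ)^(ν-1))) :=
        ((Real.continuousAt_rpow_const (1/2) (ν-1) (Or.inl (by norm_num))).tendsto).comp hbase
      have h2 : Tendsto (fun z => Real.exp (-s^2/(1/2 + s/Real.sqrt z))) atTop
          (nhds (Real.exp (-2*s^2))) := by
        have h3 : Tendsto (fun z => -s^2/(1/2 + s/Real.sqrt z)) atTop
            (nhds (-s^2/(1/2:ℝ))) := tendsto_const_nhds.div hbase (by norm_num)
        have h4 : -s^2/(1/2:ℝ) = -2*s^2 := by ring
        rw [h4] at h3
        exact (Real.continuous_exp.tendsto _).comp h3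
      exact Filter.Tendsto.congr' (Filter.EventuallyEq.symm hev) (h1.mul h2)
  have hval : (∫ s : ℝ, (1/2:ℝ)^(ν-1) * Real.exp (-2*s^2)) =
      (1/2:ℝ)^(ν-1) * Real.sqrt (π/2) := by
    rw [MeasureTheory.integral_const_mul]
    congr 1
    exact integral_gaussian 2
  rw [hval] at key
  have keyc := key.const_mul ((2:ℝ)^(ν-1))
  have hcv : (2:ℝ)^(ν-1) * ((1/2:ℝ)^(ν-1) * Real.sqrt (π/2)) = Real.sqrt (π/2) := by
    rw [← mul_assoc, ← Real.mul_rpow (by norm_num) (by norm_num)]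
    norm_num
  rw [hcv] at keyc
  apply keyc.congr'
  filter_upwards [eventually_gt_atTop 0] with z hz
  exact (aux_besselK_eq ν hz).symm
theorem stmt16 (k lam S₀ μt σ : ℝ) (hk : 0 < k) (hlam : 0 < lam) (hS : 0 < S₀)
    (hσ : 0 < σ) :
    let α := (-μt + Real.sqrt (μt ^ 2 + 2 * σ ^ 2 * lam)) / σ ^ 2
    Filter.Tendsto (fun x =>
        (2 * lam ^ k /
            (Real.sqrt (2 * π) * Real.Gamma k * σ *
              (μt ^ 2 + 2 * σ ^ 2 * lam) ^ ((2 * k - 1) / 4) * S₀) *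
          (x / S₀) ^ (μt / σ ^ 2 - 1) * |Real.log (x / S₀)| ^ (k - 1/2) *
          besselK (k - 1/2)
            (Real.sqrt (μt ^ 2 + 2 * σ ^ 2 * lam) / σ ^ 2 * |Real.log (x / S₀)|)) /
        (lam ^ k / (Real.Gamma k * (μt ^ 2 + 2 * σ ^ 2 * lam) ^ (k / 2) * S₀) *
          (x / S₀) ^ (-α - 1) * Real.log (x / S₀) ^ (k - 1)))
      Filter.atTop (nhds 1) := by
  intro α
  have hα : α = (-μt + Real.sqrt (μt ^ 2 + 2 * σ ^ 2 * lam)) / σ ^ 2 := rfl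
  set D := μt ^ 2 + 2 * σ ^ 2 * lam with hD
  have hD0 : 0 < D := by rw [hD]; positivity
  set c := Real.sqrt D / σ ^ 2 with hc
  have hc0 : 0 < c := div_pos (Real.sqrt_pos.2 hD0) (by positivity)
  have hΓ : 0 < Real.Gamma k := Real.Gamma_pos_of_pos hk
  have hπ : (0:ℝ) < Real.sqrt (π/2) := Real.sqrt_pos.2 (by positivity)
  -- constant identity
  have h4 : Real.sqrt (4:ℝ) = 2 := by
    rw [show (4:ℝ) = 2^2 by norm_num, Real.sqrt_sq (by norm_num : (0:ℝ) ≤ 2)]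
  have h2π : Real.sqrt (2*π) = 2 * Real.sqrt (π/2) := by
    rw [show (2:ℝ)*π = 4*(π/2) by ring, Real.sqrt_mul (by norm_num) _, h4]
  have hσ2 : Real.sqrt (σ^2) = σ := Real.sqrt_sq hσ.le
  have hcs : Real.sqrt c = D^((1:ℝ)/4) / σ := by
    rw [hc, Real.sqrt_div (Real.sqrt_nonneg D) (σ^2), hσ2,
      Real.sqrt_eq_rpow, Real.sqrt_eq_rpow, ← Real.rpow_mul hD0.le]
    norm_num
  have hsplit : D^((2*k-1)/4) * D^((1:ℝ)/4) = D^(k/2) := by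
    rw [← Real.rpow_add hD0, show (2*k-1)/4 + 1/4 = k/2 by ring]
  have hconst : 2 * lam ^ k / (Real.sqrt (2*π) * Real.Gamma k * σ * D^((2*k-1)/4) * S₀) *
      Real.sqrt (π/2) = lam^k / (Real.Gamma k * D^(k/2) * S₀) * Real.sqrt c := by
    rw [hcs, h2π]
    have hne1 : Real.sqrt (π/2) ≠ 0 := hπ.ne'
    have hne2 : Real.Gamma k ≠ 0 := hΓ.ne'
    have hne3 : σ ≠ 0 := hσ.ne'
    have hne4 : D^((2*k-1)/4) ≠ 0 := (Real.rpow_pos_of_pos hD0 _).ne'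
    have hne5 : D^(k/2) ≠ 0 := (Real.rpow_pos_of_pos hD0 _).ne'
    have hne6 : S₀ ≠ 0 := hS.ne'
    field_simp
    linear_combination (-1:ℝ) * hsplit
  -- tendsto setup
  have hxS : Tendsto (fun x => x/S₀) atTop atTop := tendsto_id.atTop_div_const hS
  have hlog : Tendsto (fun x => Real.log (x/S₀)) atTop atTop :=
    Real.tendsto_log_atTop.comp hxS
  have hcy : Tendsto (fun x => c * Real.log (x/S₀)) atTop atTop :=
    hlog.const_mul_atTop hc0
  have hG := (besselK_asymp (k - 1/2)).comp hcy
  have hdiv := hG.div_const (Real.sqrt (π/2))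
  rw [div_self hπ.ne'] at hdiv
  apply hdiv.congr'
  filter_upwards [eventually_ge_atTop (S₀ * Real.exp 1)] with x hx
  simp only [Function.comp_apply]
  have h2e : (2:ℝ) ≤ Real.exp 1 := by linarith [Real.add_one_le_exp 1]
  have hx1 : Real.exp 1 ≤ x/S₀ := by
    rw [le_div_iff₀ hS]; linarith [hx]
  have hx0 : 0 < x/S₀ := lt_of_lt_of_le (by positivity) hx1
  set y := Real.log (x/S₀) with hy
  have hy1 : 1 ≤ y := by
    rw [hy, show (1:ℝ) = Real.log (Real.exp 1) from (Real.log_exp 1).symm]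
    exact Real.log_le_log (Real.exp_pos 1) hx1
  have hy0 : 0 < y := lt_of_lt_of_le one_pos hy1
  rw [abs_of_pos hy0]
  -- rewrite rpow of x/S₀ into exponentials
  rw [Real.rpow_def_of_pos hx0 (μt / σ ^ 2 - 1), Real.rpow_def_of_pos hx0 (-α - 1), ← hy]
  -- split exponents
  rw [show k - 1/2 = (k-1) + (1/2:ℝ) from by ring, Real.rpow_add hy0,
    Real.sqrt_mul hc0.le y, Real.sqrt_eq_rpow y]
  have hexp : Real.exp (c*y) * Real.exp (y * (-α - 1)) = Real.exp (y * (μt / σ ^ 2 - 1)) := by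
    rw [← Real.exp_add]
    congr 1
    rw [hα, hc]
    field_simp
    ring
  have hden : lam ^ k / (Real.Gamma k * D ^ (k / 2) * S₀) * Real.exp (y * (-α - 1)) *
      y ^ (k - 1) ≠ 0 := by
    have hB : 0 < lam ^ k / (Real.Gamma k * D ^ (k / 2) * S₀) :=
      div_pos (Real.rpow_pos_of_pos hlam k)
        (mul_pos (mul_pos hΓ (Real.rpow_pos_of_pos hD0 _)) hS)
    exact (mul_pos (mul_pos hB (Real.exp_pos _)) (Real.rpow_pos_of_pos hy0 _)).ne'
  rw [div_eq_div_iff hπ.ne' hden]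
  linear_combination
    (-(Real.exp (y * (μt / σ ^ 2 - 1)) * (y^(k-1) * y^((1:ℝ)/2)) *
      besselK (k - 1 + 1/2) (c*y))) * hconst +
    ((lam ^ k / (Real.Gamma k * D ^ (k / 2) * S₀)) * Real.sqrt c *
      (y^(k-1) * y^((1:ℝ)/2)) * besselK (k - 1 + 1/2) (c*y)) * hexp
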